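/- arXiv:1607.06927 — 2 statements merged into one kernel-verified Lean document; each statement's English description precedes it below -/
import Mathlib

section
/- The composition dep = dep₁ ; dep₂* is contained in sym = sym₁ ; sym₂*, i.e., if (a,b) ∈ dep then (a,b) ∈ sym. -/
/-- dep = dep₁ ; dep₂* is contained in sym = sym₁ ; sym₂*. -/
theorem dep_subset_sym {Expr AS Loc Var : Type*}
    (Re We : Expr → Set Loc) (Ra Wa : AS → Set Loc)
    (se : Expr → Set Var) (sa : AS → Set Var)
    (hsym2 : ∀ a b : AS, ((Ra a ∪ Wa a) ∩ (Ra b ∪ Wa b)).Nonempty →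
      Relation.ReflTransGen (fun x y => (sa x ∩ sa y).Nonempty) a b)
    (hsym1 : ∀ (a : Expr) (b : AS), ((Re a ∪ We a) ∩ (Ra b ∪ Wa b)).Nonempty →
      ∃ c, (se a ∩ sa c).Nonempty ∧
        Relation.ReflTransGen (fun x y => (sa x ∩ sa y).Nonempty) c b) :
    ∀ (a : Expr) (b : AS),
      (∃ c, (Re a ∩ Wa c).Nonempty ∧
        Relation.ReflTransGen (fun x y => (Ra x ∩ Wa y).Nonempty) c b) →
      ∃ c, (se a ∩ sa c).Nonempty ∧
        Relation.ReflTransGen (fun x y => (sa x ∩ sa y).Nonempty) c b := by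
  rintro a b ⟨c, ⟨l, hl1, hl2⟩, hcb⟩
  have hchain : Relation.ReflTransGen (fun x y => (sa x ∩ sa y).Nonempty) c b := by
    induction hcb with
    | refl => exact Relation.ReflTransGen.refl
    | tail hxy hstep ih =>
      refine ih.trans (hsym2 _ _ ?_)
      obtain ⟨m, hm1, hm2⟩ := hstep
      exact ⟨m, Or.inl hm1, Or.inr hm2⟩
  obtain ⟨c', h1, h2⟩ := hsym1 a c ⟨l, Or.inl hl1, Or.inr hl2⟩
  exact ⟨c', h1, h2.trans hchain⟩
end

section
/- Soundness of the may lockset unlock transfer: if ls_c ⊆ c(s), the released lock l satisfies l ∈ ls_c, l ∈ c(vs), and the transfer U is defined by (1) U(s) = ∅ if |s| = 1 and s ≠ {⋆}; (2) U(s) = s \ vs if |s ∩ vs| = 1, s ≠ {⋆}, vs ≠ {⋆}; (3) U(s) = s otherwise — then ls_c \ {l} ⊆ c(U(s)). -/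
def conc {O : Type*} (A : Set O) : Option (Set O) → Set O
  | none => A
  | some s => s

/-- May lockset unlock transfer: (1) `∅` if `|s| = 1` and `s ≠ {⋆}`;
(2) `s \ vs` if `|s ∩ vs| = 1`, `s ≠ {⋆}`, `vs ≠ {⋆}`; (3) `s` otherwise. -/
noncomputable def mayUnlockT {O : Type*} (vs s : Option (Set O)) : Option (Set O) :=
  match s, vs with
  | some a, some v =>
      if a.ncard = 1 then some (∅ : Set O)
      else if (a ∩ v).ncard = 1 then some (a \ v)
      else some a
  | some a, none => if a.ncard = 1 then some (∅ : Set O) else some a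
  | none, _ => none

/-- soundness of the may lockset unlock transfer. -/
theorem mayUnlockT_sound {O : Type*} (A : Set O) (s vs : Option (Set O))
    (lsc : Set O) (l : O)
    (hls : lsc ⊆ conc A s) (hlsA : lsc ⊆ A)
    (hlmem : l ∈ lsc) (hl : l ∈ conc A vs) :
    lsc \ {l} ⊆ conc A (mayUnlockT vs s) := by
  match s, vs with
  | none, _ => exact fun x hx => hlsA hx.1
  | some a, some v =>
      simp only [conc, mayUnlockT]
      split_ifs with h1 h2
      · obtain ⟨y, hy⟩ := Set.ncard_eq_one.mp h1
        subst hy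
        intro x hx
        have hxl : x = l := (hls hx.1).trans (hls hlmem).symm
        exact absurd hxl hx.2
      · obtain ⟨y, hy⟩ := Set.ncard_eq_one.mp h2
        intro x hx
        refine ⟨hls hx.1, fun hxv => hx.2 ?_⟩
        have hx' : x ∈ a ∩ v := ⟨hls hx.1, hxv⟩
        have hl' : l ∈ a ∩ v := ⟨hls hlmem, hl⟩
        rw [hy] at hx' hl'
        exact hx'.trans hl'.symm
      · exact fun x hx => hls hx.1
  | some a, none =>
      simp only [conc, mayUnlockT]
      split_ifs with h1
      · obtain ⟨y, hy⟩ := Set.ncard_eq_one.mp h1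
        subst hy
        intro x hx
        exact absurd ((hls hx.1).trans (hls hlmem).symm) hx.2
      · exact fun x hx => hls hx.1
end
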